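/- Let K be a bounded, C_0, characteristic kernel on ℝ^d, f an entropy function such that 1 is the unique minimizer of f, and λ > 0. Fix r > 0 and μ_0 ∈ M_+(ℝ^d), and let B_r(μ_0) := { μ ∈ M_+(ℝ^d) : d_K(μ,μ_0) ≤ r }. Then for any sequence (μ_n) ⊂ B_r(μ_0) and any μ ∈ B_r(μ_0), one has D^λ_f(μ_n|μ) → 0 if and only if d_K(μ_n, μ) → 0. -/

import Mathlib

open MeasureTheory ENNReal Filter Topology Set
open scoped ZeroAtInfty RealInnerProductSpace BoundedContinuousFunction

noncomputable section

/-- Euclidean space `ℝ^d`. -/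
abbrev Rd (d : ℕ) : Type := EuclideanSpace ℝ (Fin d)

/-- An entropy function: a proper, convex, lower semicontinuous `f : ℝ → [0,∞]`
with `f x = ∞` for `x < 0` and `f 1 = 0` (properness is automatic from `f 1 = 0`). -/
structure IsEntropy (f : ℝ → ℝ≥0∞) : Prop where
  convex : ∀ x y a b : ℝ, 0 ≤ a → 0 ≤ b → a + b = 1 →
    f (a * x + b * y) ≤ ENNReal.ofReal a * f x + ENNReal.ofReal b * f y
  lsc : LowerSemicontinuous f
  top_of_neg : ∀ x : ℝ, x < 0 → f x = ⊤
  one_eq_zero : f 1 = 0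

/-- `1` is the unique minimizer of the entropy function `f`, i.e. `f t > 0` for `t ≠ 1`. -/
def UniqueMinOne (f : ℝ → ℝ≥0∞) : Prop := ∀ t : ℝ, t ≠ 1 → 0 < f t

/-- The recession constant `f'_∞ = lim_{t → ∞} f t / t` (the limit exists for convex `f`,
so it coincides with the `limsup`). -/
noncomputable def recession (f : ℝ → ℝ≥0∞) : ℝ≥0∞ :=
  Filter.limsup (fun t : ℝ => f t / ENNReal.ofReal t) Filter.atTop

/-- The `f`-divergence of finite nonnegative measures:
`D_f(μ|ν) = ∫ f(dμ/dν) dν + f'_∞ · μˢ(ℝ^d)` where `μ = (dμ/dν) ν + μˢ`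
is the Lebesgue decomposition of `μ` w.r.t. `ν` (convention `0 ⬝ ∞ = 0`). -/
noncomputable def fDiv {d : ℕ} (f : ℝ → ℝ≥0∞) (μ ν : Measure (Rd d)) : ℝ≥0∞ :=
  ∫⁻ x, f ((μ.rnDeriv ν x).toReal) ∂ν + recession f * μ.singularPart ν Set.univ

/-- A kernel on `ℝ^d`: symmetric, positive definite, bounded, and with
`K x · ∈ C₀(ℝ^d)` for every `x`. -/
structure IsKernel {d : ℕ} (K : Rd d → Rd d → ℝ) : Prop where
  symm : ∀ x y, K x y = K y x
  posdef : ∀ (n : ℕ) (x : Fin n → Rd d) (a : Fin n → ℝ),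
    0 ≤ ∑ i, ∑ j, a i * a j * K (x i) (x j)
  bounded : ∃ C : ℝ, ∀ x, K x x ≤ C
  cont : ∀ x, Continuous (K x)
  zero_at_infty : ∀ x, Tendsto (K x) (Filter.cocompact (Rd d)) (𝓝 0)

/-- Integral of a function against a finite signed measure, via the Jordan decomposition. -/
noncomputable def sIntegral {d : ℕ} (α : SignedMeasure (Rd d)) (g : Rd d → ℝ) : ℝ :=
  ∫ x, g x ∂α.toJordanDecomposition.posPart - ∫ x, g x ∂α.toJordanDecomposition.negPart

/-- Squared MMD of two finite signed measures: `∬ K(x,y) d(α−β)(x) d(α−β)(y)`. -/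
noncomputable def mmdSq {d : ℕ} (K : Rd d → Rd d → ℝ) (α β : SignedMeasure (Rd d)) : ℝ :=
  sIntegral (α - β) (fun x => sIntegral (α - β) (fun y => K x y))

/-- The maximum mean discrepancy `d_K` of two finite signed measures. -/
noncomputable def mmd {d : ℕ} (K : Rd d → Rd d → ℝ) (α β : SignedMeasure (Rd d)) : ℝ :=
  Real.sqrt (mmdSq K α β)

/-- A kernel is characteristic if `d_K(α,β) = 0` implies `α = β` for finite signed
measures `α, β`. -/
def Characteristic {d : ℕ} (K : Rd d → Rd d → ℝ) : Prop :=
  ∀ α β : SignedMeasure (Rd d), mmd K α β = 0 → α = β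

/-- Squared MMD of two finite nonnegative measures:
`d_K(α,β)² = ∬K dα dα − 2 ∬K dβ dα + ∬K dβ dβ`. -/
noncomputable def mmdSqM {d : ℕ} (K : Rd d → Rd d → ℝ) (α β : Measure (Rd d)) : ℝ :=
  (∫ x, (∫ y, K x y ∂α) ∂α) - 2 * (∫ x, (∫ y, K x y ∂β) ∂α) + ∫ x, (∫ y, K x y ∂β) ∂β

/-- The MMD `d_K` of two finite nonnegative measures. -/
noncomputable def mmdM {d : ℕ} (K : Rd d → Rd d → ℝ) (α β : Measure (Rd d)) : ℝ :=
  Real.sqrt (mmdSqM K α β)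

/-- The MMD-regularized `f`-divergence `D^λ_{f,ν}(μ)` of a finite nonnegative measure `μ`:
`inf_{σ ∈ M₊} D_f(σ|ν) + (1/(2λ)) d_K(μ,σ)²`. -/
noncomputable def regFDivM {d : ℕ} (K : Rd d → Rd d → ℝ) (f : ℝ → ℝ≥0∞)
    (ν : Measure (Rd d)) (lam : ℝ) (μ : Measure (Rd d)) : ℝ≥0∞ :=
  ⨅ σ : {σ : Measure (Rd d) // IsFiniteMeasure σ},
    fDiv f σ.1 ν + ENNReal.ofReal (mmdSqM K μ σ.1 / (2 * lam))


section Aux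

variable {d : ℕ} {K : Rd d → Rd d → ℝ} {C : ℝ}

variable {d : ℕ} {K : Rd d → Rd d → ℝ}

lemma IsKernel.diag_nonneg (hK : IsKernel K) (x : Rd d) : 0 ≤ K x x := by
  have := hK.posdef 1 (fun _ => x) (fun _ => 1)
  simpa using this

lemma IsKernel.exists_bound (hK : IsKernel K) :
    ∃ C : ℝ, 0 ≤ C ∧ ∀ x y, |K x y| ≤ C := by
  obtain ⟨C, hC⟩ := hK.bounded
  refine ⟨C, le_trans (hK.diag_nonneg 0) (hC 0), fun x y => ?_⟩
  have h1 := hK.posdef 2 ![x, y] ![1, 1]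
  have h2 := hK.posdef 2 ![x, y] ![1, -1]
  simp [Fin.sum_univ_two] at h1 h2
  have hsymm := hK.symm x y
  have hxx := hC x
  have hyy := hC y
  rw [abs_le]
  constructor <;> nlinarith [hK.diag_nonneg x, hK.diag_nonneg y]

lemma IsKernel.measurable_uncurry (hK : IsKernel K) : Measurable (Function.uncurry K) := by
  have : StronglyMeasurable (Function.uncurry K) := by
    apply stronglyMeasurable_uncurry_of_continuous_of_stronglyMeasurable
    · intro y
      have : (fun x => K x y) = K y := by funext x; exact hK.symm x y
      rw [this]; exact hK.cont y
    · exact fun x => (hK.cont x).stronglyMeasurable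
  exact this.measurable


lemma integrable_bdd {X : Type*} [MeasurableSpace X] {ν : Measure X} [IsFiniteMeasure ν] {g : X → ℝ}
    (hm : AEStronglyMeasurable g ν) {B : ℝ} (hb : ∀ x, |g x| ≤ B) : Integrable g ν := by
  refine Integrable.mono' (integrable_const B) hm (ae_of_all _ fun x => ?_)
  rw [Real.norm_eq_abs]; exact hb x

def kint (K : Rd d → Rd d → ℝ) (β : Measure (Rd d)) (x : Rd d) : ℝ := ∫ y, K x y ∂β

def EE (K : Rd d → Rd d → ℝ) (α β : Measure (Rd d)) : ℝ := ∫ x, kint K β x ∂α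

lemma measurable_kint (hKm : Measurable (Function.uncurry K)) (β : Measure (Rd d)) [SFinite β] :
    StronglyMeasurable (kint K β) :=
  hKm.stronglyMeasurable.integral_prod_right'

lemma abs_kint_le (hC : ∀ x y, |K x y| ≤ C) (β : Measure (Rd d)) [IsFiniteMeasure β] (x : Rd d) :
    |kint K β x| ≤ C * (β univ).toReal := by
  rw [← Real.norm_eq_abs]
  refine norm_integral_le_of_norm_le_const (ae_of_all _ fun y => ?_)
  rw [Real.norm_eq_abs]; exact hC x y

lemma integrable_kint (hKm : Measurable (Function.uncurry K)) (hC : ∀ x y, |K x y| ≤ C)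
    (α β : Measure (Rd d)) [IsFiniteMeasure α] [IsFiniteMeasure β] :
    Integrable (kint K β) α :=
  integrable_bdd (measurable_kint hKm β).aestronglyMeasurable (abs_kint_le hC β)

lemma integrable_K (hKm : Measurable (Function.uncurry K)) (hC : ∀ x y, |K x y| ≤ C)
    (x : Rd d) (β : Measure (Rd d)) [IsFiniteMeasure β] :
    Integrable (fun y => K x y) β := by
  refine integrable_bdd ?_ (fun y => hC x y)
  exact (hKm.comp (measurable_prodMk_left (m := inferInstance))).aestronglyMeasurable

lemma integrable_uncurryK_prod (hKm : Measurable (Function.uncurry K)) (hC : ∀ x y, |K x y| ≤ C)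
    (α β : Measure (Rd d)) [IsFiniteMeasure α] [IsFiniteMeasure β] :
    Integrable (Function.uncurry K) (α.prod β) := by
  refine integrable_bdd hKm.aestronglyMeasurable (B := C) (fun p : Rd d × Rd d => hC p.1 p.2)

lemma EE_symm (hsym : ∀ x y, K x y = K y x) (hKm : Measurable (Function.uncurry K))
    (hC : ∀ x y, |K x y| ≤ C)
    (α β : Measure (Rd d)) [IsFiniteMeasure α] [IsFiniteMeasure β] :
    EE K α β = EE K β α := by
  have h := integral_integral_swap (f := fun x y => K x y) (μ := α) (ν := β)
    (integrable_uncurryK_prod hKm hC α β)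
  unfold EE kint
  rw [h]
  congr 1; funext y; congr 1; funext x; exact (hsym y x).symm

lemma kint_add (hKm : Measurable (Function.uncurry K)) (hC : ∀ x y, |K x y| ≤ C)
    (β γ : Measure (Rd d)) [IsFiniteMeasure β] [IsFiniteMeasure γ] (x : Rd d) :
    kint K (β + γ) x = kint K β x + kint K γ x :=
  integral_add_measure (integrable_K hKm hC x β) (integrable_K hKm hC x γ)

lemma kint_smul (c : ℝ≥0∞) (β : Measure (Rd d)) (x : Rd d) :
    kint K (c • β) x = c.toReal * kint K β x := by
  unfold kint; rw [integral_smul_measure]; rfl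

lemma EE_add_left (hKm : Measurable (Function.uncurry K)) (hC : ∀ x y, |K x y| ≤ C)
    (α γ β : Measure (Rd d)) [IsFiniteMeasure α] [IsFiniteMeasure γ] [IsFiniteMeasure β] :
    EE K (α + γ) β = EE K α β + EE K γ β :=
  integral_add_measure (integrable_kint hKm hC α β) (integrable_kint hKm hC γ β)

lemma EE_add_right (hKm : Measurable (Function.uncurry K)) (hC : ∀ x y, |K x y| ≤ C)
    (α β γ : Measure (Rd d)) [IsFiniteMeasure α] [IsFiniteMeasure γ] [IsFiniteMeasure β] :
    EE K α (β + γ) = EE K α β + EE K α γ := by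
  unfold EE
  rw [integral_congr_ae (ae_of_all _ (kint_add hKm hC β γ))]
  exact integral_add (integrable_kint hKm hC α β) (integrable_kint hKm hC α γ)

lemma EE_smul_left (c : ℝ≥0∞) (α β : Measure (Rd d)) :
    EE K (c • α) β = c.toReal * EE K α β := by
  unfold EE; rw [integral_smul_measure]; rfl

lemma EE_smul_right (c : ℝ≥0∞) (α β : Measure (Rd d)) :
    EE K α (c • β) = c.toReal * EE K α β := by
  unfold EE
  rw [show (fun x => kint K (c • β) x) = fun x => c.toReal * kint K β x from
    funext (kint_smul c β), integral_const_mul]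


lemma map_eval_pi (τ : Measure (Rd d)) [IsFiniteMeasure τ] {n : ℕ} (i : Fin n) :
    (Measure.pi fun _ : Fin n => τ).map (fun x => x i) = (τ univ) ^ (n - 1) • τ := by
  ext s hs
  rw [Measure.map_apply (measurable_pi_apply i) hs]
  have hpre : (fun x : Fin n → Rd d => x i) ⁻¹' s
      = Set.pi univ (Function.update (fun _ => (univ : Set (Rd d))) i s) := by
    ext x
    simp only [Set.mem_preimage, Set.mem_pi, Set.mem_univ, forall_true_left]
    constructor
    · intro h k
      rcases eq_or_ne k i with rfl | hk
      · simpa using h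
      · simp [Function.update_apply, hk]
    · intro h
      have := h i
      simpa using this
  rw [hpre, Measure.pi_pi]
  have hupd : ∀ k ∈ (Finset.univ : Finset (Fin n)),
      τ (Function.update (fun _ => (univ : Set (Rd d))) i s k)
        = Function.update (fun _ => τ (univ : Set (Rd d))) i (τ s) k := by
    intro k _
    simp only [Function.update_apply]
    split <;> rfl
  rw [Finset.prod_congr rfl hupd, Finset.prod_update_of_mem (Finset.mem_univ i)]
  simp only [Finset.prod_const, Measure.smul_apply, smul_eq_mul]
  rw [Finset.sdiff_singleton_eq_erase, Finset.card_erase_of_mem (Finset.mem_univ i),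
    Finset.card_univ, Fintype.card_fin]
  ring

lemma map_pair_pi (τ : Measure (Rd d)) [IsFiniteMeasure τ] {n : ℕ} {i j : Fin n} (hij : i ≠ j) :
    ((τ univ) ^ (n - 2) • τ).prod τ
      = (Measure.pi fun _ : Fin n => τ).map (fun x => (x i, x j)) := by
  haveI : IsFiniteMeasure ((τ univ) ^ (n - 2) • τ) :=
    Measure.smul_finite τ (ENNReal.pow_ne_top (measure_ne_top τ univ))
  refine Measure.prod_eq fun s t hs ht => ?_
  rw [Measure.map_apply ((measurable_pi_apply i).prodMk (measurable_pi_apply j)) (hs.prod ht)]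
  have hpre : (fun x : Fin n → Rd d => (x i, x j)) ⁻¹' (s ×ˢ t)
      = Set.pi univ (Function.update (Function.update (fun _ => (univ : Set (Rd d))) i s) j t) := by
    ext x
    simp only [Set.mem_preimage, Set.mem_prod, Set.mem_pi, Set.mem_univ, forall_true_left]
    constructor
    · rintro ⟨h1, h2⟩ k
      rcases eq_or_ne k j with rfl | hkj
      · simpa using h2
      · rcases eq_or_ne k i with rfl | hki
        · simp [Function.update_apply, hij, h1]
        · simp [Function.update_apply, hkj, hki]
    · intro h
      have hi := h i
      have hj := h j
      rw [Function.update_apply, if_neg hij] at hi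
      simp only [Function.update_self] at hj
      simp only [Function.update_self] at hi
      exact ⟨hi, hj⟩
  rw [hpre, Measure.pi_pi]
  have hupd1 : ∀ k ∈ (Finset.univ : Finset (Fin n)),
      τ (Function.update (Function.update (fun _ => (univ : Set (Rd d))) i s) j t k)
        = Function.update
            (fun k => τ (Function.update (fun _ => (univ : Set (Rd d))) i s k)) j (τ t) k := by
    intro k _
    simp only [Function.update_apply]
    split <;> rfl
  rw [Finset.prod_congr rfl hupd1, Finset.prod_update_of_mem (Finset.mem_univ j)]
  have hij' : i ∈ Finset.univ \ {j} := by
    simp [Finset.mem_sdiff, hij]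
  have hupd2 : ∀ k ∈ Finset.univ \ ({j} : Finset (Fin n)),
      τ (Function.update (fun _ => (univ : Set (Rd d))) i s k)
        = Function.update (fun _ => τ (univ : Set (Rd d))) i (τ s) k := by
    intro k _
    simp only [Function.update_apply]
    split <;> rfl
  rw [Finset.prod_congr rfl hupd2, Finset.prod_update_of_mem hij']
  simp only [Finset.prod_const, Measure.smul_apply, smul_eq_mul]
  rw [Finset.sdiff_singleton_eq_erase, Finset.sdiff_singleton_eq_erase,
    Finset.card_erase_of_mem (Finset.mem_erase.mpr ⟨hij, Finset.mem_univ i⟩),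
    Finset.card_erase_of_mem (Finset.mem_univ j), Finset.card_univ, Fintype.card_fin]
  have : n - 1 - 1 = n - 2 := by omega
  rw [this]
  ring

lemma integral_pi_single (τ : Measure (Rd d)) [IsFiniteMeasure τ] {n : ℕ} (i : Fin n)
    {g : Rd d → ℝ} (hg : StronglyMeasurable g) :
    ∫ x, g (x i) ∂(Measure.pi fun _ : Fin n => τ)
      = ((τ univ) ^ (n - 1)).toReal * ∫ z, g z ∂τ := by
  have h := integral_map (μ := Measure.pi fun _ : Fin n => τ)
    (measurable_pi_apply i).aemeasurable
    (f := g) (by rw [map_eval_pi τ i]; exact hg.aestronglyMeasurable)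
  rw [← h, map_eval_pi τ i, integral_smul_measure]
  rfl

lemma integral_pi_pair (τ : Measure (Rd d)) [IsFiniteMeasure τ] {n : ℕ} {i j : Fin n}
    (hij : i ≠ j) {F : Rd d × Rd d → ℝ} (hFm : StronglyMeasurable F) {B : ℝ}
    (hFb : ∀ p, |F p| ≤ B) :
    ∫ x, F (x i, x j) ∂(Measure.pi fun _ : Fin n => τ)
      = ((τ univ) ^ (n - 2)).toReal * ∫ z, (∫ w, F (z, w) ∂τ) ∂τ := by
  haveI : IsFiniteMeasure ((τ univ) ^ (n - 2) • τ) :=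
    Measure.smul_finite τ (ENNReal.pow_ne_top (measure_ne_top τ univ))
  have hmap := map_pair_pi τ hij
  have hmeas : AEMeasurable (fun x : Fin n → Rd d => (x i, x j))
      (Measure.pi fun _ : Fin n => τ) :=
    ((measurable_pi_apply i).prodMk (measurable_pi_apply j)).aemeasurable
  have h := integral_map hmeas (f := F) (by rw [← hmap]; exact hFm.aestronglyMeasurable)
  rw [← h, ← hmap, integral_prod _ (integrable_bdd hFm.aestronglyMeasurable hFb),
    integral_smul_measure]
  rfl

lemma integral_withDensity_ofReal {τ : Measure (Rd d)} {g : Rd d → ℝ} (hg : Measurable g)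
    (hg0 : ∀ z, 0 ≤ g z) (h : Rd d → ℝ) :
    ∫ z, h z ∂(τ.withDensity fun z => ENNReal.ofReal (g z)) = ∫ z, g z * h z ∂τ := by
  have heq : (fun z => ENNReal.ofReal (g z)) = fun z => ((g z).toNNReal : ℝ≥0∞) := rfl
  rw [heq, integral_withDensity_eq_integral_smul₀ hg.real_toNNReal.aemeasurable h]
  congr 1
  funext z
  rw [NNReal.smul_def, Real.coe_toNNReal _ (hg0 z), smul_eq_mul]

theorem EE_psd (hK : IsKernel K) (hC : ∀ x y, |K x y| ≤ C)
    (α β : Measure (Rd d)) [IsFiniteMeasure α] [IsFiniteMeasure β] :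
    0 ≤ EE K α α - 2 * EE K α β + EE K β β := by
  have hKm := hK.measurable_uncurry
  have hC0 : 0 ≤ C := le_trans (abs_nonneg _) (hC 0 0)
  set τ := α + β with hτ
  by_cases hτ0 : τ univ = 0
  · have hτz : τ = 0 := Measure.measure_univ_eq_zero.mp hτ0
    have hα : α = 0 := by
      have h1 : α ≤ τ := Measure.le_add_right le_rfl
      rw [hτz] at h1
      exact le_antisymm h1 (Measure.zero_le α)
    have hβ : β = 0 := by
      have h1 : β ≤ τ := Measure.le_add_left le_rfl
      rw [hτz] at h1
      exact le_antisymm h1 (Measure.zero_le β)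
    simp [EE, hα, hβ]
  have ham : 0 < (τ univ).toReal := ENNReal.toReal_pos hτ0 (measure_ne_top τ univ)
  set am := (τ univ).toReal with ham_def
  -- densities
  set gA := fun z => min 1 ((α.rnDeriv τ z).toReal) with hgA_def
  set gB := fun z => min 1 ((β.rnDeriv τ z).toReal) with hgB_def
  have hgAm : Measurable gA := measurable_const.min (α.measurable_rnDeriv τ).ennreal_toReal
  have hgBm : Measurable gB := measurable_const.min (β.measurable_rnDeriv τ).ennreal_toReal
  have hgA0 : ∀ z, 0 ≤ gA z := fun z => le_min zero_le_one ENNReal.toReal_nonneg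
  have hgB0 : ∀ z, 0 ≤ gB z := fun z => le_min zero_le_one ENNReal.toReal_nonneg
  have hgA1 : ∀ z, gA z ≤ 1 := fun z => min_le_left _ _
  have hgB1 : ∀ z, gB z ≤ 1 := fun z => min_le_left _ _
  have hwd : ∀ (ν : Measure (Rd d)), ν ≤ τ → ∀ (gg : Rd d → ℝ),
      gg = (fun z => min 1 ((ν.rnDeriv τ z).toReal)) →
      τ.withDensity (fun z => ENNReal.ofReal (gg z)) = ν := by
    intro ν hle gg hgg
    haveI : IsFiniteMeasure ν :=
      ⟨lt_of_le_of_lt (Measure.le_iff'.mp hle univ) (measure_lt_top τ univ)⟩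
    have hac : ν ≪ τ := hle.absolutelyContinuous
    have h1 : ν.rnDeriv τ ≤ᵐ[τ] 1 := Measure.rnDeriv_le_one_of_le hle
    have hae : (fun z => ENNReal.ofReal (gg z)) =ᵐ[τ] ν.rnDeriv τ := by
      filter_upwards [h1] with z hz
      have hz' : ν.rnDeriv τ z ≤ 1 := hz
      have hne : ν.rnDeriv τ z ≠ ∞ := (lt_of_le_of_lt hz' one_lt_top).ne
      have hle1 : (ν.rnDeriv τ z).toReal ≤ 1 := by
        rw [← ENNReal.toReal_one]
        exact ENNReal.toReal_mono one_ne_top hz'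
      rw [hgg]
      simp only [min_eq_right hle1]
      exact ENNReal.ofReal_toReal hne
    haveI : IsFiniteMeasure τ := by rw [hτ]; infer_instance
    haveI : ν.HaveLebesgueDecomposition τ := Measure.haveLebesgueDecomposition_of_sigmaFinite ν τ
    rw [withDensity_congr_ae hae, Measure.withDensity_rnDeriv_eq ν τ hac]
  have hdA : τ.withDensity (fun z => ENNReal.ofReal (gA z)) = α :=
    hwd α (Measure.le_add_right le_rfl) gA hgA_def
  have hdB : τ.withDensity (fun z => ENNReal.ofReal (gB z)) = β :=
    hwd β (Measure.le_add_left le_rfl) gB hgB_def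
  -- EE as double integral
  have hEEc : ∀ (u v : Rd d → ℝ), Measurable u → (∀ z, 0 ≤ u z) → Measurable v →
      (∀ z, 0 ≤ v z) →
      EE K (τ.withDensity fun z => ENNReal.ofReal (u z))
          (τ.withDensity fun z => ENNReal.ofReal (v z))
        = ∫ z, u z * (∫ w, v w * K z w ∂τ) ∂τ := by
    intro u v hu hu0 hv hv0
    unfold EE
    rw [integral_withDensity_ofReal hu hu0]
    congr 1
    funext z
    congr 1
    unfold kint
    exact integral_withDensity_ofReal hv hv0 (fun w => K z w)
  have hQ : EE K α α - 2 * EE K α β + EE K β β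
      = (∫ z, gA z * (∫ w, gA w * K z w ∂τ) ∂τ)
        - 2 * (∫ z, gA z * (∫ w, gB w * K z w ∂τ) ∂τ)
        + ∫ z, gB z * (∫ w, gB w * K z w ∂τ) ∂τ := by
    rw [← hdA, ← hdB, hEEc gA gA hgAm hgA0 hgAm hgA0, hEEc gA gB hgAm hgA0 hgBm hgB0,
      hEEc gB gB hgBm hgB0 hgBm hgB0]
  rw [hQ]
  -- abstract facts about double forms
  have hvK_int : ∀ (v : Rd d → ℝ), Measurable v → (∀ z, |v z| ≤ 1) → ∀ z : Rd d,
      Integrable (fun w => v w * K z w) τ := by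
    intro v hv hvb z
    refine integrable_bdd ((hv.mul (hK.cont z).measurable).aestronglyMeasurable) (B := C) ?_
    intro w
    rw [abs_mul]
    calc |v w| * |K z w| ≤ 1 * C :=
          mul_le_mul (hvb w) (hC z w) (abs_nonneg _) zero_le_one
      _ = C := one_mul C
  have hkkm : ∀ (v : Rd d → ℝ), Measurable v →
      StronglyMeasurable (fun z => ∫ w, v w * K z w ∂τ) := by
    intro v hv
    exact StronglyMeasurable.integral_prod_right'
      (f := fun p : Rd d × Rd d => v p.2 * K p.1 p.2)
      ((hv.comp measurable_snd).mul hKm).stronglyMeasurable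
  have hkkb : ∀ (v : Rd d → ℝ), (∀ z, |v z| ≤ 1) → ∀ z, |∫ w, v w * K z w ∂τ| ≤ C * am := by
    intro v hvb z
    rw [← Real.norm_eq_abs]
    refine norm_integral_le_of_norm_le_const (ae_of_all _ fun w => ?_)
    rw [Real.norm_eq_abs, abs_mul]
    calc |v w| * |K z w| ≤ 1 * C :=
          mul_le_mul (hvb w) (hC z w) (abs_nonneg _) zero_le_one
      _ = C := one_mul C
  have hII_int : ∀ (u v : Rd d → ℝ), Measurable u → (∀ z, |u z| ≤ 1) → Measurable v →
      (∀ z, |v z| ≤ 1) → Integrable (fun z => u z * (∫ w, v w * K z w ∂τ)) τ := by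
    intro u v hu hub hv hvb
    refine integrable_bdd ((hu.mul (hkkm v hv).measurable).aestronglyMeasurable)
      (B := 1 * (C * am)) ?_
    intro z
    rw [abs_mul]
    exact mul_le_mul (hub z) (hkkb v hvb z) (abs_nonneg _) zero_le_one
  set g := fun z => gA z - gB z with hg_def
  have hgm : Measurable g := hgAm.sub hgBm
  have hg1 : ∀ z, |g z| ≤ 1 := by
    intro z
    rw [abs_le]
    constructor
    · have := hgA0 z; have := hgB1 z; simp only [hg_def]; linarith
    · have := hgA1 z; have := hgB0 z; simp only [hg_def]; linarith
  have hgA1' : ∀ z, |gA z| ≤ 1 := fun z => by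
    rw [abs_le]; exact ⟨by linarith [hgA0 z], hgA1 z⟩
  have hgB1' : ∀ z, |gB z| ≤ 1 := fun z => by
    rw [abs_le]; exact ⟨by linarith [hgB0 z], hgB1 z⟩
  -- symmetry of the double form
  have hIIsym : (∫ z, gA z * (∫ w, gB w * K z w ∂τ) ∂τ)
      = ∫ z, gB z * (∫ w, gA w * K z w ∂τ) ∂τ := by
    have hint : Integrable (Function.uncurry fun z w => gA z * (gB w * K z w)) (τ.prod τ) := by
      refine integrable_bdd ?_ (B := C) ?_
      · exact (((hgAm.comp measurable_fst).mul
          ((hgBm.comp measurable_snd).mul hKm))).aestronglyMeasurable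
      · rintro ⟨z, w⟩
        simp only [Function.uncurry]
        rw [abs_mul, abs_mul]
        calc |gA z| * (|gB w| * |K z w|) ≤ 1 * (1 * C) := by
              refine mul_le_mul (hgA1' z) ?_ (by positivity) zero_le_one
              exact mul_le_mul (hgB1' w) (hC z w) (abs_nonneg _) zero_le_one
          _ = C := by ring
    have hswap := integral_integral_swap (f := fun z w => gA z * (gB w * K z w)) hint
    calc (∫ z, gA z * (∫ w, gB w * K z w ∂τ) ∂τ)
        = ∫ z, ∫ w, gA z * (gB w * K z w) ∂τ ∂τ := by
          congr 1; funext z; rw [integral_const_mul]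
      _ = ∫ w, ∫ z, gA z * (gB w * K z w) ∂τ ∂τ := hswap
      _ = ∫ w, gB w * (∫ z, gA z * K w z ∂τ) ∂τ := by
          congr 1; funext w
          rw [← integral_const_mul]
          congr 1; funext z
          rw [hK.symm z w]; ring
  -- expansion of the quadratic form
  have hinner : ∀ z, (∫ w, g w * K z w ∂τ)
      = (∫ w, gA w * K z w ∂τ) - ∫ w, gB w * K z w ∂τ := by
    intro z
    rw [← integral_sub (hvK_int gA hgAm hgA1' z) (hvK_int gB hgBm hgB1' z)]
    congr 1; funext w
    simp only [hg_def]; ring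
  have hexp : (∫ z, g z * (∫ w, g w * K z w ∂τ) ∂τ)
      = (∫ z, gA z * (∫ w, gA w * K z w ∂τ) ∂τ)
        - 2 * (∫ z, gA z * (∫ w, gB w * K z w ∂τ) ∂τ)
        + ∫ z, gB z * (∫ w, gB w * K z w ∂τ) ∂τ := by
    have h1 : (∫ z, g z * (∫ w, g w * K z w ∂τ) ∂τ)
        = ∫ z, (gA z * (∫ w, gA w * K z w ∂τ) - gA z * (∫ w, gB w * K z w ∂τ)
            - (gB z * (∫ w, gA w * K z w ∂τ) - gB z * (∫ w, gB w * K z w ∂τ))) ∂τ := by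
      congr 1; funext z
      rw [hinner z]
      simp only [hg_def]; ring
    have hab : Integrable (fun z => gA z * (∫ w, gA w * K z w ∂τ)
        - gA z * (∫ w, gB w * K z w ∂τ)) τ :=
      (hII_int gA gA hgAm hgA1' hgAm hgA1').sub (hII_int gA gB hgAm hgA1' hgBm hgB1')
    have hcd : Integrable (fun z => gB z * (∫ w, gA w * K z w ∂τ)
        - gB z * (∫ w, gB w * K z w ∂τ)) τ :=
      (hII_int gB gA hgBm hgB1' hgAm hgA1').sub (hII_int gB gB hgBm hgB1' hgBm hgB1')
    rw [h1, integral_sub hab hcd,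
      integral_sub (hII_int gA gA hgAm hgA1' hgAm hgA1')
        (hII_int gA gB hgAm hgA1' hgBm hgB1'),
      integral_sub (hII_int gB gA hgBm hgB1' hgAm hgA1')
        (hII_int gB gB hgBm hgB1' hgBm hgB1'), hIIsym]
    ring
  rw [show (∫ z, gA z * (∫ w, gA w * K z w ∂τ) ∂τ)
        - 2 * (∫ z, gA z * (∫ w, gB w * K z w ∂τ) ∂τ)
        + ∫ z, gB z * (∫ w, gB w * K z w ∂τ) ∂τ
      = ∫ z, g z * (∫ w, g w * K z w ∂τ) ∂τ from hexp.symm]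
  -- now the iid argument
  set Jg := ∫ z, g z * (∫ w, g w * K z w ∂τ) ∂τ with hJg_def
  set R := ∫ z, g z * g z * K z z ∂τ with hR_def
  have hKzz_m : Measurable (fun z : Rd d => K z z) :=
    hKm.comp (measurable_id.prodMk measurable_id)
  have hRterm : ∀ z, |g z * g z * K z z| ≤ C := by
    intro z
    rw [abs_mul, abs_mul]
    calc |g z| * |g z| * |K z z| ≤ 1 * 1 * C := by
          refine mul_le_mul (mul_le_mul (hg1 z) (hg1 z) (abs_nonneg _) zero_le_one)
            (hC z z) (abs_nonneg _) (by norm_num)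
      _ = C := by ring
  have hRle : R ≤ C * am := by
    have hint : Integrable (fun z => g z * g z * K z z) τ :=
      integrable_bdd (((hgm.mul hgm).mul hKzz_m).aestronglyMeasurable) hRterm
    calc R ≤ ∫ _z, C ∂τ := by
          refine integral_mono hint (integrable_const C) fun z => ?_
          exact le_trans (le_abs_self _) (hRterm z)
      _ = C * am := by rw [integral_const, smul_eq_mul, mul_comm]; rfl
  have key : ∀ m : ℕ, 1 ≤ m → 0 ≤ am * R + (m : ℝ) * Jg := by
    intro m hm
    set π := Measure.pi fun _ : Fin (m + 1) => τ with hπ_def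
    have hterm_m : ∀ i j : Fin (m + 1),
        Measurable (fun x : Fin (m + 1) → Rd d => g (x i) * g (x j) * K (x i) (x j)) := by
      intro i j
      refine ((hgm.comp (measurable_pi_apply i)).mul (hgm.comp (measurable_pi_apply j))).mul ?_
      exact show Measurable fun x : Fin (m + 1) → Rd d => Function.uncurry K (x i, x j) from
        hKm.comp ((measurable_pi_apply i).prodMk (measurable_pi_apply j))
    have hterm_b : ∀ (i j : Fin (m + 1)) (x : Fin (m + 1) → Rd d),
        |g (x i) * g (x j) * K (x i) (x j)| ≤ C := by
      intro i j x
      rw [abs_mul, abs_mul]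
      calc |g (x i)| * |g (x j)| * |K (x i) (x j)| ≤ 1 * 1 * C := by
            refine mul_le_mul (mul_le_mul (hg1 _) (hg1 _) (abs_nonneg _) zero_le_one)
              (hC _ _) (abs_nonneg _) (by norm_num)
        _ = C := by ring
    have hterm_int : ∀ i j : Fin (m + 1),
        Integrable (fun x : Fin (m + 1) → Rd d => g (x i) * g (x j) * K (x i) (x j)) π :=
      fun i j => integrable_bdd (hterm_m i j).aestronglyMeasurable (hterm_b i j)
    have hpos : (0:ℝ) ≤ ∫ x, ∑ i, ∑ j, g (x i) * g (x j) * K (x i) (x j) ∂π :=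
      integral_nonneg fun x => hK.posdef (m + 1) (fun i => x i) (fun i => g (x i))
    rw [integral_finset_sum _
      (fun i _ => integrable_finset_sum _ (fun j _ => hterm_int i j))] at hpos
    have hsplit2 : ∀ i : Fin (m + 1), ∫ x, ∑ j, g (x i) * g (x j) * K (x i) (x j) ∂π
        = ∑ j, ∫ x, g (x i) * g (x j) * K (x i) (x j) ∂π :=
      fun i => integral_finset_sum _ (fun j _ => hterm_int i j)
    rw [Finset.sum_congr rfl (fun i _ => hsplit2 i)] at hpos
    have hval : ∀ i j : Fin (m + 1), ∫ x, g (x i) * g (x j) * K (x i) (x j) ∂π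
        = if i = j then am ^ m * R else am ^ (m - 1) * Jg := by
      intro i j
      by_cases hij : i = j
      · subst hij
        rw [if_pos rfl]
        have h := integral_pi_single τ i (g := fun z => g z * g z * K z z)
          ((hgm.mul hgm).mul hKzz_m).stronglyMeasurable
        beta_reduce at h
        rw [show (m + 1 - 1) = m by omega, ENNReal.toReal_pow] at h
        rw [hR_def]
        exact h
      · rw [if_neg hij]
        have hFm : StronglyMeasurable (fun p : Rd d × Rd d => g p.1 * g p.2 * K p.1 p.2) :=
          (((hgm.comp measurable_fst).mul (hgm.comp measurable_snd)).mul hKm).stronglyMeasurable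
        have hFb : ∀ p : Rd d × Rd d, |g p.1 * g p.2 * K p.1 p.2| ≤ C := by
          rintro ⟨z, w⟩
          rw [abs_mul, abs_mul]
          calc |g z| * |g w| * |K z w| ≤ 1 * 1 * C := by
                refine mul_le_mul (mul_le_mul (hg1 _) (hg1 _) (abs_nonneg _) zero_le_one)
                  (hC _ _) (abs_nonneg _) (by norm_num)
            _ = C := by ring
        have h := integral_pi_pair τ hij (F := fun p : Rd d × Rd d => g p.1 * g p.2 * K p.1 p.2)
          hFm (B := C) hFb
        beta_reduce at h
        rw [show (m + 1 - 2) = m - 1 by omega, ENNReal.toReal_pow] at h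
        rw [h, hJg_def]
        congr 2
        funext z
        rw [← integral_const_mul]
        congr 1
        funext w
        ring
    rw [Finset.sum_congr rfl (fun i _ => Finset.sum_congr rfl (fun j _ => hval i j))] at hpos
    have hrow : ∀ i : Fin (m + 1),
        ∑ j, (if i = j then am ^ m * R else am ^ (m - 1) * Jg)
          = am ^ m * R + (m : ℝ) * (am ^ (m - 1) * Jg) := by
      intro i
      have h1 : ∀ j : Fin (m + 1), (if i = j then am ^ m * R else am ^ (m - 1) * Jg)
          = am ^ (m - 1) * Jg + (if i = j then am ^ m * R - am ^ (m - 1) * Jg else 0) := by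
        intro j; split <;> ring
      rw [Finset.sum_congr rfl (fun j _ => h1 j), Finset.sum_add_distrib,
        Finset.sum_ite_eq, if_pos (Finset.mem_univ i), Finset.sum_const,
        Finset.card_univ, Fintype.card_fin, nsmul_eq_mul]
      push_cast
      ring
    rw [Finset.sum_congr rfl (fun i _ => hrow i), Finset.sum_const,
      Finset.card_univ, Fintype.card_fin, nsmul_eq_mul] at hpos
    have hX : (0:ℝ) ≤ am ^ m * R + (m : ℝ) * (am ^ (m - 1) * Jg) := by
      have hn : (0:ℝ) < ((m : ℝ) + 1) := by positivity
      have := hpos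
      push_cast at this
      exact (mul_nonneg_iff_of_pos_left hn).mp this
    have hfac : am ^ m = am ^ (m - 1) * am := by
      rw [← pow_succ]
      congr 1
      omega
    rw [hfac] at hX
    have hX2 : (0:ℝ) ≤ am ^ (m - 1) * (am * R + (m : ℝ) * Jg) := by
      rw [mul_add]
      calc (0:ℝ) ≤ am ^ (m - 1) * am * R + (m : ℝ) * (am ^ (m - 1) * Jg) := hX
        _ = am ^ (m - 1) * (am * R) + am ^ (m - 1) * ((m : ℝ) * Jg) := by ring
    exact (mul_nonneg_iff_of_pos_left (pow_pos ham _)).mp hX2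
  by_contra hneg
  push_neg at hneg
  obtain ⟨m, hm⟩ := exists_nat_gt ((am * (C * am)) / (-Jg))
  have hJpos : 0 < -Jg := by linarith
  have hq0 : (0:ℝ) ≤ (am * (C * am)) / (-Jg) := div_nonneg (by positivity) hJpos.le
  have hm0 : (0:ℝ) < (m : ℝ) := lt_of_le_of_lt hq0 hm
  have hm1 : 1 ≤ m := by exact_mod_cast Nat.one_le_iff_ne_zero.mpr (by
    intro h; rw [h] at hm0; norm_num at hm0)
  have hk := key m hm1
  have h1 : (m : ℝ) * (-Jg) ≤ am * R := by linarith
  have h2 : am * R ≤ am * (C * am) := mul_le_mul_of_nonneg_left hRle ham.le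
  have h3 : am * (C * am) < (m : ℝ) * (-Jg) := (div_lt_iff₀ hJpos).mp hm
  linarith

lemma mmdSqM_eq_EE (K : Rd d → Rd d → ℝ) (α β : Measure (Rd d)) :
    mmdSqM K α β = EE K α α - 2 * EE K α β + EE K β β := rfl

lemma mmdSqM_nonneg (hK : IsKernel K) (hC : ∀ x y, |K x y| ≤ C)
    (α β : Measure (Rd d)) [IsFiniteMeasure α] [IsFiniteMeasure β] :
    0 ≤ mmdSqM K α β := by
  rw [mmdSqM_eq_EE]; exact EE_psd hK hC α β

lemma mmdM_sq (hK : IsKernel K) (hC : ∀ x y, |K x y| ≤ C)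
    (α β : Measure (Rd d)) [IsFiniteMeasure α] [IsFiniteMeasure β] :
    mmdM K α β ^ 2 = mmdSqM K α β :=
  Real.sq_sqrt (mmdSqM_nonneg hK hC α β)

lemma EE_expand (hKm : Measurable (Function.uncurry K)) (hC : ∀ x y, |K x y| ≤ C)
    (a b c e : Measure (Rd d)) [IsFiniteMeasure a] [IsFiniteMeasure b] [IsFiniteMeasure c]
    [IsFiniteMeasure e] {t : ℝ} (ht : 0 ≤ t) :
    EE K (a + ENNReal.ofReal t • b) (c + ENNReal.ofReal t • e)
      = EE K a c + t * EE K a e + t * EE K b c + t * t * EE K b e := by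
  haveI h1 : IsFiniteMeasure (ENNReal.ofReal t • b) := Measure.smul_finite b ofReal_ne_top
  haveI h2 : IsFiniteMeasure (ENNReal.ofReal t • e) := Measure.smul_finite e ofReal_ne_top
  rw [EE_add_left hKm hC, EE_add_right hKm hC, EE_add_right hKm hC,
    EE_smul_left, EE_smul_right, EE_smul_right, EE_smul_left]
  rw [ENNReal.toReal_ofReal ht]
  ring

lemma mmdM_triangle (hK : IsKernel K) (hC : ∀ x y, |K x y| ≤ C)
    (α β γ : Measure (Rd d)) [IsFiniteMeasure α] [IsFiniteMeasure β] [IsFiniteMeasure γ] :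
    mmdM K α γ ≤ mmdM K α β + mmdM K β γ := by
  have hKm := hK.measurable_uncurry
  have hQa : 0 ≤ mmdSqM K α β := mmdSqM_nonneg hK hC α β
  have hQb : 0 ≤ mmdSqM K β γ := mmdSqM_nonneg hK hC β γ
  set B := EE K α β - EE K α γ - EE K β β + EE K β γ with hB_def
  have hsymαβ : EE K β α = EE K α β := (EE_symm hK.symm hKm hC α β).symm
  have hsymβγ : EE K γ β = EE K β γ := (EE_symm hK.symm hKm hC β γ).symm
  have hsymαγ : EE K γ α = EE K α γ := (EE_symm hK.symm hKm hC α γ).symm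
  have hpoly : ∀ t : ℝ, 0 ≤ mmdSqM K β γ * (t * t) + (2 * B) * t + mmdSqM K α β := by
    intro t
    rcases le_or_gt 0 t with ht | ht
    · haveI : IsFiniteMeasure (ENNReal.ofReal t • β) := Measure.smul_finite β ofReal_ne_top
      haveI : IsFiniteMeasure (ENNReal.ofReal t • γ) := Measure.smul_finite γ ofReal_ne_top
      have h := EE_psd hK hC (α + ENNReal.ofReal t • β) (β + ENNReal.ofReal t • γ)
      rw [EE_expand hKm hC α β α β ht, EE_expand hKm hC α β β γ ht,
        EE_expand hKm hC β γ β γ ht, hsymαβ] at h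
      rw [mmdSqM_eq_EE, mmdSqM_eq_EE, hB_def]
      nlinarith [h]
    · have ht' : 0 ≤ -t := by linarith
      haveI : IsFiniteMeasure (ENNReal.ofReal (-t) • β) := Measure.smul_finite β ofReal_ne_top
      haveI : IsFiniteMeasure (ENNReal.ofReal (-t) • γ) := Measure.smul_finite γ ofReal_ne_top
      have h := EE_psd hK hC (α + ENNReal.ofReal (-t) • γ) (β + ENNReal.ofReal (-t) • β)
      rw [EE_expand hKm hC α γ α γ ht', EE_expand hKm hC α γ β β ht',
        EE_expand hKm hC β β β β ht', hsymαγ, hsymβγ] at h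
      rw [mmdSqM_eq_EE, mmdSqM_eq_EE, hB_def]
      nlinarith [h]
  have hdisc := discrim_le_zero hpoly
  rw [discrim] at hdisc
  have hB2 : B ^ 2 ≤ mmdSqM K α β * mmdSqM K β γ := by nlinarith [hdisc]
  have hBle : B ≤ Real.sqrt (mmdSqM K α β) * Real.sqrt (mmdSqM K β γ) := by
    have h1 : B ≤ |B| := le_abs_self B
    have h2 : |B| = Real.sqrt (B ^ 2) := (Real.sqrt_sq_eq_abs B).symm
    have h3 : Real.sqrt (B ^ 2) ≤ Real.sqrt (mmdSqM K α β * mmdSqM K β γ) :=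
      Real.sqrt_le_sqrt hB2
    rw [Real.sqrt_mul hQa] at h3
    linarith
  have hkey : mmdSqM K α γ = mmdSqM K α β + 2 * B + mmdSqM K β γ := by
    rw [mmdSqM_eq_EE, mmdSqM_eq_EE, mmdSqM_eq_EE, hB_def]
    ring
  unfold mmdM
  have hsum : mmdSqM K α γ ≤ (Real.sqrt (mmdSqM K α β) + Real.sqrt (mmdSqM K β γ)) ^ 2 := by
    have e1 : Real.sqrt (mmdSqM K α β) ^ 2 = mmdSqM K α β := Real.sq_sqrt hQa
    have e2 : Real.sqrt (mmdSqM K β γ) ^ 2 = mmdSqM K β γ := Real.sq_sqrt hQb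
    nlinarith [hkey, hBle]
  calc Real.sqrt (mmdSqM K α γ)
      ≤ Real.sqrt ((Real.sqrt (mmdSqM K α β) + Real.sqrt (mmdSqM K β γ)) ^ 2) :=
        Real.sqrt_le_sqrt hsum
    _ = Real.sqrt (mmdSqM K α β) + Real.sqrt (mmdSqM K β γ) := by
        rw [Real.sqrt_sq (by positivity)]

variable {f : ℝ → ℝ≥0∞}

lemma entropy_mono (hf : IsEntropy f) {s t : ℝ} (h1 : 1 ≤ s) (hst : s ≤ t) : f s ≤ f t := by
  rcases eq_or_lt_of_le hst with rfl | hlt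
  · exact le_rfl
  have ht1 : 1 < t := lt_of_le_of_lt h1 hlt
  set a := (t - s) / (t - 1) with ha_def
  set b := (s - 1) / (t - 1) with hb_def
  have hden : 0 < t - 1 := by linarith
  have ha : 0 ≤ a := div_nonneg (by linarith) hden.le
  have hb : 0 ≤ b := div_nonneg (by linarith) hden.le
  have hab : a + b = 1 := by
    rw [ha_def, hb_def]; field_simp; ring
  have hs : a * 1 + b * t = s := by
    rw [ha_def, hb_def]; field_simp
    ring
  have h := hf.convex 1 t a b ha hb hab
  rw [hs, hf.one_eq_zero, mul_zero, zero_add] at h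
  calc f s ≤ ENNReal.ofReal b * f t := h
    _ ≤ 1 * f t := by
        refine mul_le_mul_left ?_ (f t)
        rw [← ENNReal.ofReal_one]
        refine ENNReal.ofReal_le_ofReal ?_
        rw [hb_def, div_le_one hden]
        linarith
    _ = f t := one_mul _

lemma entropy_anti (hf : IsEntropy f) {s t : ℝ} (hst : s ≤ t) (ht1 : t ≤ 1) : f t ≤ f s := by
  rcases eq_or_lt_of_le hst with rfl | hlt
  · exact le_rfl
  have hs1 : s < 1 := lt_of_lt_of_le hlt ht1
  set a := (1 - t) / (1 - s) with ha_def
  set b := (t - s) / (1 - s) with hb_def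
  have hden : 0 < 1 - s := by linarith
  have ha : 0 ≤ a := div_nonneg (by linarith) hden.le
  have hb : 0 ≤ b := div_nonneg (by linarith) hden.le
  have hab : a + b = 1 := by rw [ha_def, hb_def]; field_simp; ring
  have hs : a * s + b * 1 = t := by
    rw [ha_def, hb_def]; field_simp
    ring
  have h := hf.convex s 1 a b ha hb hab
  rw [hs, hf.one_eq_zero, mul_zero, add_zero] at h
  calc f t ≤ ENNReal.ofReal a * f s := h
    _ ≤ 1 * f s := by
        refine mul_le_mul_left ?_ (f s)
        rw [← ENNReal.ofReal_one]
        refine ENNReal.ofReal_le_ofReal ?_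
        rw [ha_def, div_le_one hden]
        linarith
    _ = f s := one_mul _

lemma entropy_slope (hf : IsEntropy f) {t : ℝ} (ht : 2 ≤ t) :
    ENNReal.ofReal (t - 1) * f 2 ≤ f t := by
  rcases eq_or_lt_of_le ht with rfl | hlt
  · norm_num
  have hden : 0 < t - 1 := by linarith
  set a := (t - 2) / (t - 1) with ha_def
  set b := 1 / (t - 1) with hb_def
  have ha : 0 ≤ a := div_nonneg (by linarith) hden.le
  have hb : 0 ≤ b := div_nonneg (by linarith) hden.le
  have hab : a + b = 1 := by rw [ha_def, hb_def]; field_simp; ring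
  have hs : a * 1 + b * t = 2 := by
    rw [ha_def, hb_def]; field_simp
    ring
  have h := hf.convex 1 t a b ha hb hab
  rw [hs, hf.one_eq_zero, mul_zero, zero_add] at h
  calc ENNReal.ofReal (t - 1) * f 2
      ≤ ENNReal.ofReal (t - 1) * (ENNReal.ofReal b * f t) := mul_le_mul_right h _
    _ = ENNReal.ofReal ((t - 1) * b) * f t := by
        rw [ENNReal.ofReal_mul hden.le, mul_assoc]
    _ = f t := by
        rw [show (t - 1) * b = 1 by rw [hb_def]; field_simp]
        simp

lemma recession_pos (hf : IsEntropy f) (hmin : UniqueMinOne f) : 0 < recession f := by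
  have h2 : 0 < f 2 := hmin 2 (by norm_num)
  have hkey : f 2 / 2 ≤ recession f := by
    refine le_limsup_of_frequently_le' (Eventually.frequently ?_)
    filter_upwards [eventually_ge_atTop (2 : ℝ)] with t ht
    have hslope := entropy_slope hf ht
    rw [ENNReal.le_div_iff_mul_le (Or.inl (by positivity)) (Or.inl ofReal_ne_top)]
    calc f 2 / 2 * ENNReal.ofReal t = f 2 * (ENNReal.ofReal t / 2) := by
          rw [div_eq_mul_inv, div_eq_mul_inv]; ring
      _ ≤ f 2 * ENNReal.ofReal (t - 1) := by
          refine mul_le_mul_right ?_ _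
          rw [show (2 : ℝ≥0∞) = ENNReal.ofReal 2 by simp, ← ENNReal.ofReal_div_of_pos (by norm_num)]
          exact ENNReal.ofReal_le_ofReal (by linarith)
      _ = ENNReal.ofReal (t - 1) * f 2 := mul_comm _ _
      _ ≤ f t := hslope
  calc (0 : ℝ≥0∞) < f 2 / 2 := ENNReal.div_pos h2.ne' ofNat_ne_top
    _ ≤ recession f := hkey

lemma entropy_pointwise (hf : IsEntropy f) {ε : ℝ} (hε : 0 < ε) (hε2 : ε ≤ 1/2)
    {c : ℝ≥0∞} (hc0 : 0 < c) (hc1 : c ≤ f (1 - ε)) (hc2 : c ≤ f (1 + ε)) (hc3 : c ≤ f 2)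
    (hc4 : c ≤ 1) {t : ℝ} (ht : 0 ≤ t) :
    ENNReal.ofReal |t - 1| ≤ ENNReal.ofReal ε + f t / c := by
  have hcT : c ≠ ⊤ := (lt_of_le_of_lt hc4 one_lt_top).ne
  rcases lt_or_ge |t - 1| ε with hlt | hge
  · calc ENNReal.ofReal |t - 1| ≤ ENNReal.ofReal ε := ENNReal.ofReal_le_ofReal hlt.le
      _ ≤ _ := le_self_add
  · refine le_trans ?_ le_add_self
    rw [ENNReal.le_div_iff_mul_le (Or.inl hc0.ne') (Or.inl hcT)]
    rcases le_or_gt t 1 with ht1 | ht1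
    · -- t ≤ 1 - ε
      have habs : |t - 1| = 1 - t := by rw [abs_sub_comm, abs_of_nonneg (by linarith)]
      have htle : t ≤ 1 - ε := by rw [habs] at hge; linarith
      have hb1 : |t - 1| ≤ 1 := by rw [habs]; linarith
      calc ENNReal.ofReal |t - 1| * c ≤ 1 * c := by
            refine mul_le_mul_left ?_ c
            rw [← ENNReal.ofReal_one]
            exact ENNReal.ofReal_le_ofReal hb1
        _ = c := one_mul c
        _ ≤ f (1 - ε) := hc1
        _ ≤ f t := entropy_anti hf htle (by linarith)
    · have habs : |t - 1| = t - 1 := abs_of_nonneg (by linarith)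
      have htge : 1 + ε ≤ t := by rw [habs] at hge; linarith
      rcases le_or_gt t 2 with ht2 | ht2
      · have hb1 : |t - 1| ≤ 1 := by rw [habs]; linarith
        calc ENNReal.ofReal |t - 1| * c ≤ 1 * c := by
              refine mul_le_mul_left ?_ c
              rw [← ENNReal.ofReal_one]
              exact ENNReal.ofReal_le_ofReal hb1
          _ = c := one_mul c
          _ ≤ f (1 + ε) := hc2
          _ ≤ f t := entropy_mono hf (by linarith) htge
      · calc ENNReal.ofReal |t - 1| * c ≤ ENNReal.ofReal (t - 1) * f 2 := by
              rw [habs]; exact mul_le_mul_right hc3 _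
          _ ≤ f t := entropy_slope hf ht2.le

lemma fDiv_control (hf : IsEntropy f) (hmin : UniqueMinOne f)
    (μ : Measure (Rd d)) [IsFiniteMeasure μ] {ε' : ℝ} (hε' : 0 < ε') :
    ∃ δ : ℝ, 0 < δ ∧ ∀ (σ : Measure (Rd d)), IsFiniteMeasure σ →
      fDiv f σ μ < ENNReal.ofReal δ →
      (∫⁻ x, ENNReal.ofReal |(σ.rnDeriv μ x).toReal - 1| ∂μ).toReal
        + (σ.singularPart μ univ).toReal ≤ ε' := by
  set M := (μ univ).toReal with hM_def
  have hM : 0 ≤ M := ENNReal.toReal_nonneg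
  set ε₁ := min (ε' / (2 * (M + 1))) (1/2) with hε₁_def
  have hε₁0 : 0 < ε₁ := lt_min (div_pos hε' (by positivity)) (by norm_num)
  have hε₁2 : ε₁ ≤ 1/2 := min_le_right _ _
  have hε₁μ : ε₁ * M ≤ ε' / 2 := by
    have h1 : ε₁ ≤ ε' / (2 * (M + 1)) := min_le_left _ _
    have h2 : ε₁ * (2 * (M + 1)) ≤ ε' := (le_div_iff₀ (by positivity)).mp h1
    nlinarith [hε₁0.le]
  set cc := min (min (f (1 - ε₁)) (f (1 + ε₁))) (min (f 2) 1) with hcc_def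
  have hcc0 : 0 < cc := by
    refine lt_min (lt_min (hmin _ (by intro h; nlinarith [hε₁0]) )
      (hmin _ (by intro h; nlinarith [hε₁0]))) (lt_min (hmin 2 (by norm_num)) zero_lt_one)
  have hcc4 : cc ≤ 1 := le_trans (min_le_right _ _) (min_le_right _ _)
  have hccT : cc ≠ ⊤ := (lt_of_le_of_lt hcc4 one_lt_top).ne
  have hccR : 0 < cc.toReal := ENNReal.toReal_pos hcc0.ne' hccT
  set rc := min (recession f) 1 with hrc_def
  have hrc0 : 0 < rc := lt_min (recession_pos hf hmin) zero_lt_one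
  have hrcT : rc ≠ ⊤ := (lt_of_le_of_lt (min_le_right _ _) one_lt_top).ne
  have hrcR : 0 < rc.toReal := ENNReal.toReal_pos hrc0.ne' hrcT
  set δ := min (ε' / 4 * cc.toReal) (ε' / 4 * rc.toReal) with hδ_def
  have hδ0 : 0 < δ := lt_min (by positivity) (by positivity)
  refine ⟨δ, hδ0, ?_⟩
  intro σ hσfin hσ
  haveI := hσfin
  set ρ := fun x => (σ.rnDeriv μ x).toReal with hρ_def
  have hρm : Measurable ρ := (Measure.measurable_rnDeriv σ μ).ennreal_toReal
  have hfm : Measurable f := hf.lsc.measurable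
  have hL : ∫⁻ x, f (ρ x) ∂μ ≤ ENNReal.ofReal δ := le_of_lt (lt_of_le_of_lt le_self_add hσ)
  have hS : recession f * σ.singularPart μ univ ≤ ENNReal.ofReal δ :=
    le_of_lt (lt_of_le_of_lt le_add_self hσ)
  have hsing : σ.singularPart μ univ ≤ ENNReal.ofReal δ / rc := by
    rw [ENNReal.le_div_iff_mul_le (Or.inl hrc0.ne') (Or.inl hrcT)]
    calc σ.singularPart μ univ * rc = rc * σ.singularPart μ univ := mul_comm _ _
      _ ≤ recession f * σ.singularPart μ univ := mul_le_mul_left (min_le_left _ _) _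
      _ ≤ ENNReal.ofReal δ := hS
  have hpw : ∀ x, ENNReal.ofReal |ρ x - 1| ≤ ENNReal.ofReal ε₁ + f (ρ x) / cc := by
    intro x
    refine entropy_pointwise hf hε₁0 hε₁2 hcc0 ?_ ?_ ?_ ?_ ENNReal.toReal_nonneg
    · exact le_trans (min_le_left _ _) (min_le_left _ _)
    · exact le_trans (min_le_left _ _) (min_le_right _ _)
    · exact le_trans (min_le_right _ _) (min_le_left _ _)
    · exact hcc4
  have hlint : ∫⁻ x, ENNReal.ofReal |ρ x - 1| ∂μ
      ≤ ENNReal.ofReal ε₁ * μ univ + cc⁻¹ * ENNReal.ofReal δ := by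
    calc ∫⁻ x, ENNReal.ofReal |ρ x - 1| ∂μ
        ≤ ∫⁻ x, (ENNReal.ofReal ε₁ + f (ρ x) / cc) ∂μ := lintegral_mono hpw
      _ = ENNReal.ofReal ε₁ * μ univ + ∫⁻ x, f (ρ x) / cc ∂μ := by
          rw [lintegral_add_left measurable_const, lintegral_const]
      _ = ENNReal.ofReal ε₁ * μ univ + cc⁻¹ * ∫⁻ x, f (ρ x) ∂μ := by
          congr 1
          rw [← lintegral_const_mul cc⁻¹ (show Measurable fun x => f (ρ x) from hfm.comp hρm)]
          congr 1
          funext x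
          rw [div_eq_mul_inv, mul_comm]
      _ ≤ ENNReal.ofReal ε₁ * μ univ + cc⁻¹ * ENNReal.ofReal δ :=
          add_le_add le_rfl (mul_le_mul_right hL _)
  have hfin2 : ENNReal.ofReal ε₁ * μ univ + cc⁻¹ * ENNReal.ofReal δ ≠ ∞ := by
    refine ENNReal.add_ne_top.mpr ⟨?_, ?_⟩
    · exact ENNReal.mul_ne_top ofReal_ne_top (measure_ne_top μ univ)
    · exact ENNReal.mul_ne_top (ENNReal.inv_ne_top.mpr hcc0.ne') ofReal_ne_top
  have h1 : (∫⁻ x, ENNReal.ofReal |ρ x - 1| ∂μ).toReal ≤ ε₁ * M + cc.toReal⁻¹ * δ := by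
    have h := ENNReal.toReal_mono hfin2 hlint
    rwa [ENNReal.toReal_add (ENNReal.mul_ne_top ofReal_ne_top (measure_ne_top μ univ))
      (ENNReal.mul_ne_top (ENNReal.inv_ne_top.mpr hcc0.ne') ofReal_ne_top),
      ENNReal.toReal_mul, ENNReal.toReal_mul, ENNReal.toReal_ofReal hε₁0.le,
      ENNReal.toReal_inv, ENNReal.toReal_ofReal hδ0.le] at h
  have h2 : (σ.singularPart μ univ).toReal ≤ δ / rc.toReal := by
    have hne : ENNReal.ofReal δ / rc ≠ ∞ := (ENNReal.div_lt_top ofReal_ne_top hrc0.ne').ne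
    have h := ENNReal.toReal_mono hne hsing
    rwa [ENNReal.toReal_div, ENNReal.toReal_ofReal hδ0.le] at h
  have hd1 : cc.toReal⁻¹ * δ ≤ ε' / 4 := by
    have hδ1 : δ ≤ ε' / 4 * cc.toReal := min_le_left _ _
    have := mul_le_mul_of_nonneg_left hδ1 (inv_nonneg.mpr hccR.le)
    rwa [mul_comm (ε' / 4) _, ← mul_assoc, inv_mul_cancel₀ hccR.ne', one_mul] at this
  have hd2 : δ / rc.toReal ≤ ε' / 4 := by
    rw [div_le_iff₀ hrcR]
    calc δ ≤ ε' / 4 * rc.toReal := min_le_right _ _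
      _ = ε' / 4 * rc.toReal := rfl
  linarith

lemma integral_diff_le (σ μ : Measure (Rd d)) [IsFiniteMeasure σ] [IsFiniteMeasure μ]
    {g : Rd d → ℝ} (hgm : Measurable g) {B : ℝ} (hB : ∀ x, |g x| ≤ B) :
    |(∫ x, g x ∂σ) - ∫ x, g x ∂μ|
      ≤ B * ((∫⁻ x, ENNReal.ofReal |(σ.rnDeriv μ x).toReal - 1| ∂μ).toReal
          + (σ.singularPart μ univ).toReal) := by
  have hB0 : 0 ≤ B := le_trans (abs_nonneg _) (hB 0)
  set ρ := fun x => (σ.rnDeriv μ x).toReal with hρ_def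
  have hρm : Measurable ρ := (Measure.measurable_rnDeriv σ μ).ennreal_toReal
  have hlfin : (∫⁻ x, ENNReal.ofReal |ρ x - 1| ∂μ) ≠ ∞ := by
    have hle : ∀ x, ENNReal.ofReal |ρ x - 1| ≤ σ.rnDeriv μ x + 1 := by
      intro x
      calc ENNReal.ofReal |ρ x - 1| ≤ ENNReal.ofReal (ρ x + 1) := by
            refine ENNReal.ofReal_le_ofReal (abs_le.mpr ⟨?_, ?_⟩)
            · have : 0 ≤ ρ x := ENNReal.toReal_nonneg
              linarith
            · linarith
        _ = ENNReal.ofReal (ρ x) + ENNReal.ofReal 1 :=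
            ENNReal.ofReal_add ENNReal.toReal_nonneg zero_le_one
        _ ≤ σ.rnDeriv μ x + 1 := by
            refine add_le_add ENNReal.ofReal_toReal_le (by simp)
    refine ne_top_of_le_ne_top ?_ (lintegral_mono hle)
    have heq : ∫⁻ x, (σ.rnDeriv μ x + 1) ∂μ = (∫⁻ x, σ.rnDeriv μ x ∂μ) + μ univ := by
      rw [lintegral_add_right _ measurable_const, lintegral_const, one_mul]
    rw [heq]
    exact ENNReal.add_ne_top.mpr
      ⟨(lt_of_le_of_lt (Measure.lintegral_rnDeriv_le) (measure_lt_top σ univ)).ne,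
        measure_ne_top μ univ⟩
  have hint1 : Integrable (fun x => ρ x - 1) μ := by
    refine ⟨(hρm.sub measurable_const).aestronglyMeasurable, ?_⟩
    rw [hasFiniteIntegral_iff_norm]
    simp only [Real.norm_eq_abs]
    exact lt_top_iff_ne_top.mpr hlfin
  haveI hwdfin : IsFiniteMeasure (μ.withDensity (σ.rnDeriv μ)) := by
    constructor
    rw [withDensity_apply _ MeasurableSet.univ, setLIntegral_univ]
    exact lt_of_le_of_lt Measure.lintegral_rnDeriv_le (measure_lt_top σ univ)
  haveI : σ.HaveLebesgueDecomposition μ := Measure.haveLebesgueDecomposition_of_sigmaFinite σ μ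
  have hgσ : ∫ x, g x ∂σ
      = (∫ x, g x ∂(μ.withDensity (σ.rnDeriv μ))) + ∫ x, g x ∂(σ.singularPart μ) := by
    conv_lhs => rw [← Measure.rnDeriv_add_singularPart σ μ]
    exact integral_add_measure (integrable_bdd hgm.aestronglyMeasurable hB)
      (integrable_bdd hgm.aestronglyMeasurable hB)
  have hwd_eq : ∫ x, g x ∂(μ.withDensity (σ.rnDeriv μ)) = ∫ x, ρ x * g x ∂μ := by
    have hae : σ.rnDeriv μ =ᵐ[μ] fun x => ENNReal.ofReal (ρ x) := by
      filter_upwards [Measure.rnDeriv_lt_top σ μ] with x hx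
      rw [hρ_def]
      exact (ENNReal.ofReal_toReal hx.ne).symm
    rw [withDensity_congr_ae hae,
      integral_withDensity_ofReal hρm (fun x => ENNReal.toReal_nonneg) g]
  have hint2 : Integrable (fun x => (ρ x - 1) * g x) μ := by
    have h := Integrable.bdd_mul (f := g) (c := B) hint1 hgm.aestronglyMeasurable
      (ae_of_all _ fun x => by rw [Real.norm_eq_abs]; exact hB x)
    exact h.congr (ae_of_all _ fun x => by ring)
  have habs : ∫ x, |ρ x - 1| ∂μ = (∫⁻ x, ENNReal.ofReal |ρ x - 1| ∂μ).toReal := by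
    rw [integral_eq_lintegral_of_nonneg_ae (f := fun x => |ρ x - 1|) (ae_of_all _ fun x => abs_nonneg _)
      ((hρm.sub measurable_const).abs.aestronglyMeasurable)]
  have hterm1 : |∫ x, (ρ x - 1) * g x ∂μ|
      ≤ B * (∫⁻ x, ENNReal.ofReal |ρ x - 1| ∂μ).toReal := by
    calc |∫ x, (ρ x - 1) * g x ∂μ| = ‖∫ x, (ρ x - 1) * g x ∂μ‖ := (Real.norm_eq_abs _).symm
      _ ≤ ∫ x, ‖(ρ x - 1) * g x‖ ∂μ := norm_integral_le_integral_norm _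
      _ = ∫ x, |(ρ x - 1) * g x| ∂μ := by simp only [Real.norm_eq_abs]
      _ ≤ ∫ x, B * |ρ x - 1| ∂μ := by
          refine integral_mono hint2.abs (hint1.abs.const_mul B) fun x => ?_
          rw [abs_mul]
          calc |ρ x - 1| * |g x| ≤ |ρ x - 1| * B :=
                mul_le_mul_of_nonneg_left (hB x) (abs_nonneg _)
            _ = B * |ρ x - 1| := mul_comm _ _
      _ = B * ∫ x, |ρ x - 1| ∂μ := integral_const_mul B _
      _ = B * (∫⁻ x, ENNReal.ofReal |ρ x - 1| ∂μ).toReal := by rw [habs]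
  have hterm2 : |∫ x, g x ∂(σ.singularPart μ)| ≤ B * (σ.singularPart μ univ).toReal := by
    rw [← Real.norm_eq_abs]
    exact norm_integral_le_of_norm_le_const
      (ae_of_all _ fun x => by rw [Real.norm_eq_abs]; exact hB x)
  have hintρg : Integrable (fun x => ρ x * g x) μ := by
    have := hint2.add (integrable_bdd hgm.aestronglyMeasurable hB)
    exact this.congr (ae_of_all _ fun x => by simp only [Pi.add_apply]; ring)
  have hsplit : (∫ x, g x ∂σ) - ∫ x, g x ∂μ
      = (∫ x, (ρ x - 1) * g x ∂μ) + ∫ x, g x ∂(σ.singularPart μ) := by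
    have heq2 : ∫ x, (ρ x - 1) * g x ∂μ = (∫ x, ρ x * g x ∂μ) - ∫ x, g x ∂μ := by
      rw [← integral_sub hintρg (integrable_bdd hgm.aestronglyMeasurable hB)]
      congr 1
      funext x
      ring
    rw [hgσ, hwd_eq, heq2]
    ring
  rw [hsplit]
  calc |(∫ x, (ρ x - 1) * g x ∂μ) + ∫ x, g x ∂(σ.singularPart μ)|
      ≤ |∫ x, (ρ x - 1) * g x ∂μ| + |∫ x, g x ∂(σ.singularPart μ)| := abs_add_le _ _
    _ ≤ B * (∫⁻ x, ENNReal.ofReal |ρ x - 1| ∂μ).toReal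
        + B * (σ.singularPart μ univ).toReal := add_le_add hterm1 hterm2
    _ = _ := by ring

lemma mmdSqM_le_T (hK : IsKernel K) (hC : ∀ x y, |K x y| ≤ C)
    (σ μ : Measure (Rd d)) [IsFiniteMeasure σ] [IsFiniteMeasure μ] :
    mmdSqM K σ μ ≤ C * ((∫⁻ x, ENNReal.ofReal |(σ.rnDeriv μ x).toReal - 1| ∂μ).toReal
      + (σ.singularPart μ univ).toReal) ^ 2 := by
  have hKm := hK.measurable_uncurry
  set T := (∫⁻ x, ENNReal.ofReal |(σ.rnDeriv μ x).toReal - 1| ∂μ).toReal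
    + (σ.singularPart μ univ).toReal with hT_def
  set h := fun x => kint K σ x - kint K μ x with hh_def
  have hhm : Measurable h :=
    (measurable_kint hKm σ).measurable.sub (measurable_kint hKm μ).measurable
  have hhb : ∀ x, |h x| ≤ C * T := fun x =>
    integral_diff_le σ μ (hK.cont x).measurable (B := C) (fun y => hC x y)
  have key := integral_diff_le σ μ hhm (B := C * T) hhb
  have hexp : mmdSqM K σ μ = (∫ x, h x ∂σ) - ∫ x, h x ∂μ := by
    rw [mmdSqM_eq_EE,
      show (∫ x, h x ∂σ) = EE K σ σ - EE K σ μ from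
        integral_sub (integrable_kint hKm hC σ σ) (integrable_kint hKm hC σ μ),
      show (∫ x, h x ∂μ) = EE K μ σ - EE K μ μ from
        integral_sub (integrable_kint hKm hC μ σ) (integrable_kint hKm hC μ μ),
      EE_symm hK.symm hKm hC μ σ]
    ring
  rw [hexp]
  calc (∫ x, h x ∂σ) - ∫ x, h x ∂μ ≤ |(∫ x, h x ∂σ) - ∫ x, h x ∂μ| := le_abs_self _
    _ ≤ C * T * T := key
    _ = C * T ^ 2 := by ring

lemma fDiv_self_eq_zero (hf : IsEntropy f) (μ : Measure (Rd d)) [SigmaFinite μ] :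
    fDiv f μ μ = 0 := by
  unfold fDiv
  have h1 : ∫⁻ x, f ((μ.rnDeriv μ x).toReal) ∂μ = 0 := by
    have hae : (fun x => f ((μ.rnDeriv μ x).toReal)) =ᵐ[μ] 0 := by
      filter_upwards [Measure.rnDeriv_self μ] with x hx
      rw [hx]
      simp [hf.one_eq_zero]
    rw [lintegral_congr_ae hae]
    simp
  rw [h1, Measure.singularPart_self]
  simp


end Aux

/-- On MMD-balls of `M₊(ℝ^d)`, the regularized `f`-divergence metrizes the MMD topology:
for `μ_n, μ ∈ B_r(μ_0)`, `D^λ_f(μ_n|μ) → 0` iff `d_K(μ_n, μ) → 0`. -/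
theorem regFDiv_metrizes_on_balls {d : ℕ} (K : Rd d → Rd d → ℝ)
    (hK : IsKernel K) (hchar : Characteristic K)
    (f : ℝ → ℝ≥0∞) (hf : IsEntropy f) (hmin : UniqueMinOne f)
    (lam : ℝ) (hlam : 0 < lam) (r : ℝ) (hr : 0 < r)
    (μ0 : Measure (Rd d)) [IsFiniteMeasure μ0]
    (μs : ℕ → Measure (Rd d)) (hfin : ∀ n, IsFiniteMeasure (μs n))
    (μ : Measure (Rd d)) [IsFiniteMeasure μ]
    (hball : ∀ n, mmdM K (μs n) μ0 ≤ r) (hμball : mmdM K μ μ0 ≤ r) :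
    Tendsto (fun n => regFDivM K f μ lam (μs n)) atTop (𝓝 0) ↔
      Tendsto (fun n => mmdM K (μs n) μ) atTop (𝓝 0) := by

  obtain ⟨C, hC0, hC⟩ := hK.exists_bound
  have hKm := hK.measurable_uncurry
  constructor
  · -- hard direction
    intro hD
    rw [Metric.tendsto_atTop]
    intro ε hε
    set s := Real.sqrt C with hs_def
    have hs0 : 0 ≤ s := Real.sqrt_nonneg C
    have hε'0 : 0 < ε / (4 * (s + 1)) := by positivity
    obtain ⟨δ₁, hδ₁0, hδ₁⟩ := fDiv_control hf hmin μ hε'0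
    set δ := min δ₁ (ε ^ 2 / (32 * lam)) with hδ_def
    have hδ0 : 0 < δ := lt_min hδ₁0 (by positivity)
    have hev : ∀ᶠ n in atTop, regFDivM K f μ lam (μs n) < ENNReal.ofReal δ :=
      hD.eventually_lt_const (ENNReal.ofReal_pos.mpr hδ0)
    obtain ⟨N, hN⟩ := eventually_atTop.mp hev
    refine ⟨N, fun n hn => ?_⟩
    haveI := hfin n
    have hn' := hN n hn
    rw [regFDivM] at hn'
    obtain ⟨⟨σ, hσfin⟩, hσ⟩ := iInf_lt_iff.mp hn'
    haveI := hσfin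
    -- the fDiv part is small
    have h1 : fDiv f σ μ < ENNReal.ofReal δ₁ := by
      refine lt_of_lt_of_le (lt_of_le_of_lt le_self_add hσ) ?_
      exact ENNReal.ofReal_le_ofReal (min_le_left _ _)
    have hT := hδ₁ σ hσfin h1
    have hσμ : mmdM K σ μ ≤ ε / 4 := by
      have hTle : mmdSqM K σ μ ≤ C * (ε / (4 * (s + 1))) ^ 2 := by
        refine le_trans (mmdSqM_le_T hK hC σ μ) ?_
        refine mul_le_mul_of_nonneg_left ?_ hC0
        refine pow_le_pow_left₀ (add_nonneg ENNReal.toReal_nonneg ENNReal.toReal_nonneg) hT 2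
      calc mmdM K σ μ = Real.sqrt (mmdSqM K σ μ) := rfl
        _ ≤ Real.sqrt (C * (ε / (4 * (s + 1))) ^ 2) := Real.sqrt_le_sqrt hTle
        _ = s * (ε / (4 * (s + 1))) := by
            rw [Real.sqrt_mul hC0, Real.sqrt_sq hε'0.le]
        _ ≤ ε / 4 := by
            rw [show s * (ε / (4 * (s + 1))) = s * ε / (4 * (s + 1)) by ring,
              div_le_div_iff₀ (by positivity) (by norm_num : (0:ℝ) < 4)]
            nlinarith
    -- the mmd part is small
    have h2 : ENNReal.ofReal (mmdSqM K (μs n) σ / (2 * lam)) < ENNReal.ofReal δ :=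
      lt_of_le_of_lt le_add_self hσ
    have hx0 : 0 ≤ mmdSqM K (μs n) σ / (2 * lam) :=
      div_nonneg (mmdSqM_nonneg hK hC (μs n) σ) (by positivity)
    have h3 : mmdSqM K (μs n) σ / (2 * lam) < δ :=
      (ENNReal.ofReal_lt_ofReal_iff_of_nonneg hx0).mp h2
    have h4 : mmdSqM K (μs n) σ < 2 * lam * δ := by
      rw [div_lt_iff₀ (by positivity)] at h3
      linarith
    have hnσ : mmdM K (μs n) σ ≤ ε / 4 := by
      calc mmdM K (μs n) σ = Real.sqrt (mmdSqM K (μs n) σ) := rfl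
        _ ≤ Real.sqrt (2 * lam * δ) := Real.sqrt_le_sqrt h4.le
        _ ≤ Real.sqrt ((ε / 4) ^ 2) := by
            refine Real.sqrt_le_sqrt ?_
            have hδle : δ ≤ ε ^ 2 / (32 * lam) := min_le_right _ _
            have : 2 * lam * δ ≤ 2 * lam * (ε ^ 2 / (32 * lam)) :=
              mul_le_mul_of_nonneg_left hδle (by positivity)
            calc 2 * lam * δ ≤ 2 * lam * (ε ^ 2 / (32 * lam)) := this
              _ = ε ^ 2 / 16 := by field_simp; ring
              _ = (ε / 4) ^ 2 := by ring
        _ = ε / 4 := Real.sqrt_sq (by positivity)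
    have htri := mmdM_triangle hK hC (μs n) σ μ
    rw [Real.dist_eq, sub_zero, abs_of_nonneg (show (0:ℝ) ≤ mmdM K (μs n) μ from Real.sqrt_nonneg _)]
    calc mmdM K (μs n) μ ≤ mmdM K (μs n) σ + mmdM K σ μ := htri
      _ ≤ ε / 4 + ε / 4 := add_le_add hnσ hσμ
      _ < ε := by linarith
  · -- easy direction
    intro hM
    have hb : ∀ n, regFDivM K f μ lam (μs n)
        ≤ ENNReal.ofReal (mmdM K (μs n) μ ^ 2 / (2 * lam)) := by
      intro n
      haveI := hfin n
      have hle := iInf_le (fun σ : {σ : Measure (Rd d) // IsFiniteMeasure σ} =>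
        fDiv f σ.1 μ + ENNReal.ofReal (mmdSqM K (μs n) σ.1 / (2 * lam)))
        ⟨μ, inferInstance⟩
      rw [fDiv_self_eq_zero hf μ, zero_add] at hle
      refine le_trans hle ?_
      rw [mmdM_sq hK hC]
    have hub : Tendsto (fun n => ENNReal.ofReal (mmdM K (μs n) μ ^ 2 / (2 * lam)))
        atTop (𝓝 0) := by
      have h1 : Tendsto (fun n => mmdM K (μs n) μ ^ 2 / (2 * lam)) atTop
          (𝓝 (0 ^ 2 / (2 * lam))) := (hM.pow 2).div_const _
      have h2 : (0:ℝ) ^ 2 / (2 * lam) = 0 := by ring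
      rw [h2] at h1
      have := ENNReal.tendsto_ofReal h1
      rwa [ENNReal.ofReal_zero] at this
    exact tendsto_of_tendsto_of_tendsto_of_le_of_le tendsto_const_nhds hub
      (fun n => zero_le) hb
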